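/- Let X be a locally compact metrisable space with pairwise commuting continuous maps φ₁,…,φ_d : X → X and let J ⊆ {1,…,d}. If X contains no nonempty J-wandering open set, then the set X_{Jr} of J-recurrent points is dense in X. -/

import Mathlib

open Filter Topology Set

/-- `phiIter φ n = φ₁^[n₁] ∘ ⋯ ∘ φ_d^[n_d]`. -/
def phiIter {X : Type*} {d : ℕ} (φ : Fin d → X → X) (n : Fin d → ℕ) : X → X :=
  (List.ofFn fun j : Fin d => (φ j)^[n j]).foldr (· ∘ ·) id

/-- A point is `J`-recurrent if `φ_{n_k}(x) → x` along a sequence strictly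
increasing in the directions of `J`. -/
def JRecurrent {X : Type*} [TopologicalSpace X] {d : ℕ} (φ : Fin d → X → X)
    (J : Set (Fin d)) (x : X) : Prop :=
  ∃ n : ℕ → Fin d → ℕ, (∀ j ∈ J, StrictMono fun k => n k j) ∧
    Tendsto (fun k => phiIter φ (n k) x) atTop (𝓝 x)

lemma phiIter_zero {X : Type*} (φ : Fin 0 → X → X) (n : Fin 0 → ℕ) : phiIter φ n = id := by
  simp [phiIter]

lemma phiIter_succ {X : Type*} {d : ℕ} (φ : Fin (d+1) → X → X) (n : Fin (d+1) → ℕ) :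
    phiIter φ n = (φ 0)^[n 0] ∘ phiIter (fun j => φ j.succ) (fun j => n j.succ) := by
  simp [phiIter, List.ofFn_succ]

lemma foldr_comp_continuous {X : Type*} [TopologicalSpace X] :
    ∀ (l : List (X → X)), (∀ f ∈ l, Continuous f) → Continuous (l.foldr (· ∘ ·) id)
  | [], _ => continuous_id
  | f :: l, h => by
    simp only [List.foldr_cons]
    exact (h f (by simp)).comp (foldr_comp_continuous l fun g hg => h g (by simp [hg]))

lemma continuous_phiIter {X : Type*} [TopologicalSpace X] {d : ℕ} {φ : Fin d → X → X}
    (hcont : ∀ j, Continuous (φ j)) (n : Fin d → ℕ) : Continuous (phiIter φ n) := by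
  apply foldr_comp_continuous
  intro f hf
  rw [List.mem_ofFn] at hf
  obtain ⟨j, rfl⟩ := hf
  exact (hcont j).iterate (n j)

lemma commute_phiIter {X : Type*} : ∀ {d : ℕ} (φ : Fin d → X → X) (n : Fin d → ℕ) (g : X → X),
    (∀ j, Function.Commute g (φ j)) → Function.Commute g (phiIter φ n)
  | 0, φ, n, g, _ => by rw [phiIter_zero]; exact fun x => rfl
  | d+1, φ, n, g, h => by
    rw [phiIter_succ]
    exact ((h 0).iterate_right (n 0)).comp_right
      (commute_phiIter (fun j => φ j.succ) (fun j => n j.succ) g fun j => h j.succ)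

lemma phiIter_add {X : Type*} : ∀ {d : ℕ} (φ : Fin d → X → X),
    (∀ i j, Function.Commute (φ i) (φ j)) → ∀ (a b : Fin d → ℕ),
    phiIter φ (a + b) = phiIter φ a ∘ phiIter φ b
  | 0, φ, _, a, b => by rw [phiIter_zero, phiIter_zero, phiIter_zero]; rfl
  | d+1, φ, hc, a, b => by
    have ht := phiIter_add (fun j => φ j.succ) (fun i j => hc i.succ j.succ)
      (fun j => a j.succ) (fun j => b j.succ)
    have hcm : Function.Commute ((φ 0)^[b 0])
        (phiIter (fun j => φ j.succ) (fun j => a j.succ)) :=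
      commute_phiIter _ _ _ fun j => (hc 0 j.succ).iterate_left (b 0)
    rw [phiIter_succ, phiIter_succ, phiIter_succ]
    have h0 : (a + b) 0 = a 0 + b 0 := rfl
    have hs : (fun j : Fin d => (a + b) j.succ)
        = (fun j => a j.succ) + (fun j => b j.succ) := rfl
    rw [h0, hs, Function.iterate_add, ht]
    funext x
    simp only [Function.comp_apply]
    rw [hcm.eq]

/-- Proposition 11 (`wandrec`): if the system has no nonempty `J`-wandering open set,
then the `J`-recurrent points are dense. -/
theorem dense_JRecurrent_of_no_wandering {X : Type*} [TopologicalSpace X]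
    [LocallyCompactSpace X] [TopologicalSpace.MetrizableSpace X] {d : ℕ}
    (φ : Fin d → X → X) (hcont : ∀ j, Continuous (φ j))
    (hcomm : ∀ i j, Function.Commute (φ i) (φ j))
    (J : Set (Fin d))
    (hnw : ∀ V : Set X, IsOpen V →
      (∀ n : Fin d → ℕ, (∀ j ∈ J, 0 < n j) → phiIter φ n ⁻¹' V ∩ V = ∅) → V = ∅) :
    Dense {x : X | JRecurrent φ J x} := by
  letI : MetricSpace X := TopologicalSpace.metrizableSpaceMetric X
  -- basic non-wandering consequence
  have base : ∀ V : Set X, IsOpen V → V.Nonempty →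
      ∃ n : Fin d → ℕ, (∀ j ∈ J, 0 < n j) ∧ (V ∩ phiIter φ n ⁻¹' V).Nonempty := by
    intro V hV hne
    by_contra h
    push_neg at h
    apply absurd (hnw V hV ?_) (Set.nonempty_iff_ne_empty.mp hne)
    intro n hn
    rw [Set.inter_comm]
    exact h n hn
  -- deep returns: returns with all J-coordinates at least N
  have claim : ∀ (N : ℕ) (V : Set X), IsOpen V → V.Nonempty →
      ∃ m : Fin d → ℕ, (∀ j ∈ J, N ≤ m j) ∧ (V ∩ phiIter φ m ⁻¹' V).Nonempty := by
    intro N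
    induction N with
    | zero =>
      intro V hV hne
      obtain ⟨n, _, hn2⟩ := base V hV hne
      exact ⟨n, fun j _ => Nat.zero_le _, hn2⟩
    | succ N ih =>
      intro V hV hne
      obtain ⟨m, hm1, hm2⟩ := ih V hV hne
      have hWo : IsOpen (V ∩ phiIter φ m ⁻¹' V) :=
        hV.inter ((continuous_phiIter hcont m).isOpen_preimage V hV)
      obtain ⟨n, hn1, hn2⟩ := base _ hWo hm2
      refine ⟨m + n, fun j hj => ?_, ?_⟩
      · have := hm1 j hj; have := hn1 j hj
        simp only [Pi.add_apply]; omega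
      · obtain ⟨x, hx1, hx2⟩ := hn2
        refine ⟨x, hx1.1, ?_⟩
        have : phiIter φ (m + n) x = phiIter φ m (phiIter φ n x) := by
          rw [phiIter_add φ hcomm m n]; rfl
        rw [Set.mem_preimage, this]
        have hx2' : phiIter φ n x ∈ V ∩ phiIter φ m ⁻¹' V := hx2
        exact hx2'.2
  rw [dense_iff_inter_open]
  intro U hU hUne
  -- shrinking lemma
  have shrink : ∀ (V : Set X), IsOpen V → V.Nonempty → ∀ r : ℝ, 0 < r →
      ∃ W : Set X, IsOpen W ∧ W.Nonempty ∧ IsCompact (closure W) ∧ closure W ⊆ V ∧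
        ∃ c, W ⊆ Metric.ball c r := by
    rintro V hV ⟨x, hx⟩ r hr
    have hV' : IsOpen (V ∩ Metric.ball x r) := hV.inter Metric.isOpen_ball
    have hx' : x ∈ V ∩ Metric.ball x r := ⟨hx, Metric.mem_ball_self hr⟩
    obtain ⟨K, hKc, hxK, hKsub⟩ := exists_compact_subset hV' hx'
    have hclK : closure (interior K) ⊆ K := closure_minimal interior_subset hKc.isClosed
    exact ⟨interior K, isOpen_interior, ⟨x, hxK⟩,
      hKc.of_isClosed_subset isClosed_closure hclK,
      hclK.trans (hKsub.trans Set.inter_subset_left), x,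
      interior_subset.trans (hKsub.trans Set.inter_subset_right)⟩
  -- one construction step
  have step : ∀ (k : ℕ) (p : Set X × (Fin d → ℕ)), IsOpen p.1 → p.1.Nonempty →
      ∃ q : Set X × (Fin d → ℕ),
        (IsOpen q.1 ∧ q.1.Nonempty ∧ IsCompact (closure q.1)) ∧
        closure q.1 ⊆ p.1 ∧ closure q.1 ⊆ phiIter φ q.2 ⁻¹' p.1 ∧
        (∀ j ∈ J, p.2 j < q.2 j) ∧ ∃ c, q.1 ⊆ Metric.ball c (1/(k+1)) := by
    intro k p hop hne
    obtain ⟨m, hm1, hm2⟩ := claim (1 + Finset.univ.sup p.2) p.1 hop hne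
    have hWo : IsOpen (p.1 ∩ phiIter φ m ⁻¹' p.1) :=
      hop.inter ((continuous_phiIter hcont m).isOpen_preimage _ hop)
    obtain ⟨W, hWopen, hWne, hWcomp, hWcl, c, hWball⟩ :=
      shrink _ hWo hm2 (1/(k+1)) (by positivity)
    refine ⟨(W, m), ⟨hWopen, hWne, hWcomp⟩, hWcl.trans Set.inter_subset_left,
      hWcl.trans Set.inter_subset_right, fun j hj => ?_, c, hWball⟩
    have h1 : p.2 j ≤ Finset.univ.sup p.2 := Finset.le_sup (Finset.mem_univ j)
    have h2 := hm1 j hj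
    show p.2 j < m j
    omega
  choose F hF using step
  obtain ⟨W0, hW0o, hW0ne, hW0comp, hW0cl, -⟩ := shrink U hU hUne 1 one_pos
  -- the nested sequence
  let seq : ℕ → {p : Set X × (Fin d → ℕ) //
      IsOpen p.1 ∧ p.1.Nonempty ∧ IsCompact (closure p.1)} := fun k =>
    Nat.rec ⟨(W0, 0), hW0o, hW0ne, hW0comp⟩
      (fun k s => ⟨F k s.1 s.2.1 s.2.2.1, (hF k s.1 s.2.1 s.2.2.1).1⟩) k
  have hrel : ∀ k : ℕ,
      closure (seq (k+1)).1.1 ⊆ (seq k).1.1 ∧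
      closure (seq (k+1)).1.1 ⊆ phiIter φ (seq (k+1)).1.2 ⁻¹' (seq k).1.1 ∧
      (∀ j ∈ J, (seq k).1.2 j < (seq (k+1)).1.2 j) ∧
      ∃ c, (seq (k+1)).1.1 ⊆ Metric.ball c (1/(k+1)) :=
    fun k => (hF k (seq k).1 (seq k).2.1 (seq k).2.2.1).2
  -- the common point
  have hnested : ∀ k, closure (seq (k+1)).1.1 ⊆ closure (seq k).1.1 :=
    fun k => ((hrel k).1).trans subset_closure
  obtain ⟨x, hx⟩ := IsCompact.nonempty_iInter_of_sequence_nonempty_isCompact_isClosed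
    (fun k => closure (seq k).1.1) hnested (fun k => (seq k).2.2.1.closure)
    (seq 0).2.2.2 (fun _ => isClosed_closure)
  have hxk : ∀ k, x ∈ closure (seq k).1.1 := Set.mem_iInter.mp hx
  refine ⟨x, hW0cl (hxk 0), ?_⟩
  -- the recurrence sequence
  refine ⟨fun k => (seq (k+2)).1.2, fun j hj => strictMono_nat_of_lt_succ fun k =>
    (hrel (k+2)).2.2.1 j hj, ?_⟩
  have hdist : ∀ k : ℕ, dist (phiIter φ ((seq (k+2)).1.2) x) x ≤ 2/(k+1) := by
    intro k
    obtain ⟨c, hc⟩ := (hrel k).2.2.2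
    have h1 : x ∈ (seq (k+1)).1.1 := (hrel (k+1)).1 (hxk (k+2))
    have h2 : phiIter φ ((seq (k+2)).1.2) x ∈ (seq (k+1)).1.1 :=
      (hrel (k+1)).2.1 (hxk (k+2))
    have d1 : dist x c < 1/(k+1) := by simpa [Metric.mem_ball] using hc h1
    have d2 : dist (phiIter φ ((seq (k+2)).1.2) x) c < 1/(k+1) := by
      simpa [Metric.mem_ball] using hc h2
    calc dist (phiIter φ ((seq (k+2)).1.2) x) x
        ≤ dist (phiIter φ ((seq (k+2)).1.2) x) c + dist x c := dist_triangle_right _ _ _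
      _ ≤ 2/(k+1) := by
          have : (1:ℝ)/(k+1) + 1/(k+1) = 2/(k+1) := by ring
          linarith
  rw [tendsto_iff_dist_tendsto_zero]
  apply squeeze_zero' (Eventually.of_forall fun k => dist_nonneg)
    (Eventually.of_forall hdist)
  have h2 : Tendsto (fun k : ℕ => 2 * (1/((k:ℝ)+1))) atTop (𝓝 (2 * 0)) :=
    tendsto_one_div_add_atTop_nhds_zero_nat.const_mul 2
  simpa only [mul_one_div, mul_zero] using h2
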